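/- Let α ∈ Π_aff^{re,+} with α > c. Then there exist k ≥ 1 and affine positive real roots β_1, …, β_k, each with β_i < c, such that s_α = s_{β_1} s_{β_2} ⋯ s_{β_k} and Σ_{i=1}^{k} β_i = α. -/

import Mathlib

open scoped BigOperators

namespace AffA

/-- Elements `⟨w, λ⟩` representing `w · t_λ` in the affine Weyl group
`W_aff = W ⋉ Q∨` of type `A_{n-1}^{(1)}`; the translation part `λ` is recorded
in `ε`-coordinates. -/
@[ext]
structure Aff (n : ℕ) where
  w : Equiv.Perm (Fin n)
  t : Fin n → ℤ

namespace Aff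

variable {n : ℕ}

instance : Nonempty (Aff n) := ⟨⟨1, 0⟩⟩

/-- multiplication: `(w t_λ)(v t_μ) = (wv) t_{v⁻¹λ + μ}`. -/
def mul' (x y : Aff n) : Aff n := ⟨x.w * y.w, fun i => x.t (y.w i) + y.t i⟩

def inv' (x : Aff n) : Aff n := ⟨x.w⁻¹, fun i => - x.t (x.w⁻¹ i)⟩

instance : Group (Aff n) where
  mul := mul'
  one := ⟨1, 0⟩
  inv := inv'
  mul_assoc a b c := by
    show mul' (mul' a b) c = mul' a (mul' b c)
    simp only [mul', Aff.mk.injEq]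
    refine ⟨mul_assoc _ _ _, funext fun i => ?_⟩
    simp [Equiv.Perm.mul_apply, add_assoc]
  one_mul a := by
    obtain ⟨aw, av⟩ := a
    show mul' ⟨1, 0⟩ ⟨aw, av⟩ = ⟨aw, av⟩
    simp only [mul', Aff.mk.injEq]
    exact ⟨one_mul _, funext fun i => by simp⟩
  mul_one a := by
    obtain ⟨aw, av⟩ := a
    show mul' ⟨aw, av⟩ ⟨1, 0⟩ = ⟨aw, av⟩
    simp only [mul', Aff.mk.injEq]
    exact ⟨mul_one _, funext fun i => by simp⟩
  inv_mul_cancel a := by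
    obtain ⟨aw, av⟩ := a
    show mul' (inv' ⟨aw, av⟩) ⟨aw, av⟩ = ⟨1, 0⟩
    simp only [mul', inv', Aff.mk.injEq]
    exact ⟨inv_mul_cancel _, funext fun i => by simp⟩

/-- cyclic successor on the vertices `α_0, …, α_{n-1}` of the affine Dynkin diagram. -/
def fsucc (i : Fin n) : Fin n :=
  ⟨(i.val + 1) % n, Nat.mod_lt _ (Nat.lt_of_le_of_lt (Nat.zero_le _) i.isLt)⟩

/-- the coefficient of `α_0`. -/
def coeff0 (a : Fin n → ℤ) : ℤ := if h : 0 < n then a ⟨0, h⟩ else 0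

/-- the `ε`-coordinates of the finite part of an element of the affine root
lattice written in the coordinates of the simple roots `α_0, …, α_{n-1}`
(`δ` is sent to `0`). -/
def finPart (a : Fin n → ℤ) : Fin n → ℤ := fun i => a (fsucc i) - a i

/-- `c = δ = α_0 + α_1 + ⋯ + α_{n-1}`, in simple root coordinates. -/
def cvec (n : ℕ) : Fin n → ℤ := fun _ => 1

/-- the affine Cartan matrix of type `A_{n-1}^{(1)}` (for `n ≥ 3`). -/
def cartan (i j : Fin n) : ℤ :=
  if i = j then 2 else if j = fsucc i ∨ i = fsucc j then -1 else 0

/-- the natural pairing `⟨a, b∨⟩` of elements of the affine root lattice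
(simple root coordinates). -/
def pairing (a b : Fin n → ℤ) : ℤ := ∑ i : Fin n, ∑ j : Fin n, a i * cartan i j * b j

/-- real roots of the affine root system: lattice vectors of norm `2`. -/
def IsRealRoot (a : Fin n → ℤ) : Prop := pairing a a = 2

/-- affine positive real roots: real roots with nonnegative coordinates. -/
def IsPosRoot (a : Fin n → ℤ) : Prop := IsRealRoot a ∧ ∀ i, 0 ≤ a i

/-- perpendicularity of affine roots. -/
def Perp (a b : Fin n → ℤ) : Prop := pairing a b = 0

/-- the support of an affine root. -/
def supp (a : Fin n → ℤ) : Finset (Fin n) := Finset.univ.filter fun i => a i ≠ 0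

/-- the supports of `a` and `b` are disconnected in the affine Dynkin diagram
(a cycle on `α_0, …, α_{n-1}`): no vertex of one is equal or adjacent to a
vertex of the other. -/
def Disconn (a b : Fin n → ℤ) : Prop :=
  ∀ i j : Fin n, a i ≠ 0 → b j ≠ 0 → i ≠ j ∧ j ≠ fsucc i ∧ i ≠ fsucc j

/-- for roots `a, b < c` (0–1 vectors), `a ∩ b = Σ_{α_i ∈ supp a ∩ supp b} α_i`. -/
def inter (a b : Fin n → ℤ) : Fin n → ℤ :=
  fun i => if a i ≠ 0 ∧ b i ≠ 0 then 1 else 0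

instance : Nonempty (Equiv.Perm (Fin n)) := ⟨1⟩

/-- the reflection `s_β = s_α t_{mα}` associated to the real root `β = α + mδ`
(given in simple root coordinates). -/
noncomputable def sref (a : Fin n → ℤ) : Aff n :=
  ⟨Classical.epsilon fun w : Equiv.Perm (Fin n) => ∃ p q : Fin n,
      finPart a = Pi.single p 1 - Pi.single q 1 ∧ w = Equiv.swap p q,
    fun i => coeff0 a * finPart a i⟩

/-- the simple reflections `s_0, …, s_{n-1}`. -/
noncomputable def simple (i : Fin n) : Aff n := sref (Pi.single i 1)

/-- the Coxeter length, via the Iwahori–Matsumoto formula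
`ℓ(w t_λ) = Σ_{γ ∈ Π⁺} |χ(w·γ < 0) + ⟨λ, γ⟩|`. -/
def len (x : Aff n) : ℕ :=
  ∑ p : Fin n, ∑ q : Fin n,
    if p < q then ((if x.w q < x.w p then (1 : ℤ) else 0) + (x.t p - x.t q)).natAbs else 0

/-- translation `t_v` by an element `v` of the (co)root lattice given in
`ε`-coordinates. -/
def trE (v : Fin n → ℤ) : Aff n := ⟨1, v⟩

/-- a Bruhat step: an edge of the moment graph which increases the length. -/
def bstep (u v : Aff n) : Prop :=
  (∃ a, IsPosRoot a ∧ v = u * sref a) ∧ len u < len v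

/-- the Bruhat order: `u ≤ v` iff there is an increasing chain from `u` to `v`
in the moment graph. -/
def ble (u v : Aff n) : Prop := Relation.ReflTransGen bstep u v

/-- there is a chain in the moment graph from `u` to `v` of total degree `≤ d`. -/
def ChainTo (d : Fin n → ℤ) (u v : Aff n) : Prop :=
  ∃ l : List (Fin n → ℤ),
    (∀ b ∈ l, IsPosRoot b) ∧ l.sum ≤ d ∧ v = u * (l.map sref).prod

/-- the set of elements reachable from some `u' ≤ u` by a chain of degree `≤ d`. -/
def nbhdSet (d : Fin n → ℤ) (u : Aff n) : Set (Aff n) :=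
  {v | ∃ u', ble u' u ∧ ChainTo d u' v}

/-- the combinatorial curve neighborhood `Γ_d(u)`: the Bruhat-maximal elements
among those reachable from some `u' ≤ u` by a chain of degree `≤ d`. -/
def curveNbhd (d : Fin n → ℤ) (u : Aff n) : Set (Aff n) :=
  {v | v ∈ nbhdSet d u ∧ ∀ x ∈ nbhdSet d u, ble v x → x = v}

/-- one step of the Hecke product. -/
noncomputable def heckeStep (u : Aff n) (i : Fin n) : Aff n :=
  if len u < len (u * simple i) then u * simple i else u

/-- the Hecke product `u · v`: multiply `u` on the right, left to right, by the
letters of a reduced word for `v`. -/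
noncomputable def heckeMul (u v : Aff n) : Aff n :=
  (Classical.epsilon fun l : List (Fin n) =>
      (l.map simple).prod = v ∧ l.length = len v).foldl heckeStep u

/-- the Hecke product `s_{β_1} · s_{β_2} · ⋯ · s_{β_r}` of the reflections of a
list of roots. -/
noncomputable def heckeList (l : List (Fin n → ℤ)) : Aff n :=
  l.foldl (fun u b => heckeMul u (sref b)) 1

/-- the defining recursion for `z_d`: `z_0 = id` and `z_d = s_α · z_{d-α}`
(Hecke product), where `α` is any maximal root with `α ≤ d`. -/
inductive IsZ : (Fin n → ℤ) → Aff n → Prop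
  | zero : IsZ 0 1
  | step {d a : Fin n → ℤ} {x : Aff n} :
      IsPosRoot a → a ≤ d →
      (∀ b, IsPosRoot b → b ≤ d → a ≤ b → b = a) →
      IsZ (d - a) x → IsZ d (heckeMul (sref a) x)

end Aff
end AffA

namespace SrefFact

open AffA Aff

variable {n : ℕ}

lemma mod_succ_eq {k : ℕ} (h : k < n) : (k + 1) % n = if k + 1 = n then 0 else k + 1 := by
  by_cases h1 : k + 1 = n
  · rw [if_pos h1, h1, Nat.mod_self]
  · rw [if_neg h1]; exact Nat.mod_eq_of_lt (by omega)

lemma fsucc_val (i : Fin n) : (fsucc i).val = if i.val + 1 = n then 0 else i.val + 1 :=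
  mod_succ_eq i.isLt

lemma fsucc_inj : Function.Injective (fsucc : Fin n → Fin n) := by
  intro i j h
  have h' := congrArg Fin.val h
  rw [fsucc_val, fsucc_val] at h'
  have hi := i.isLt
  have hj := j.isLt
  apply Fin.ext
  split_ifs at h' <;> omega

/-- the cyclic shift as a permutation. -/
noncomputable def cyc (n : ℕ) : Equiv.Perm (Fin n) :=
  Equiv.ofBijective fsucc (Finite.injective_iff_bijective.mp fsucc_inj)

lemma cyc_apply (i : Fin n) : cyc n i = fsucc i := rfl

lemma sum_finPart (a : Fin n → ℤ) : ∑ i, finPart a i = 0 := by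
  have h : ∑ i, a (cyc n i) = ∑ i, a i := Equiv.sum_comp (cyc n) a
  simp only [finPart, Finset.sum_sub_distrib, ← cyc_apply, h, sub_self]

lemma fsucc_ne (hn : 2 ≤ n) (i : Fin n) : fsucc i ≠ i := by
  intro h
  have h' := congrArg Fin.val h
  rw [fsucc_val] at h'
  have := i.isLt
  split_ifs at h' <;> omega

lemma fsucc_fsucc_ne (hn : 3 ≤ n) (i : Fin n) : fsucc (fsucc i) ≠ i := by
  intro h
  have h' := congrArg Fin.val h
  rw [fsucc_val, fsucc_val] at h'
  have := i.isLt
  split_ifs at h' <;> omega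

lemma cartan_eq (hn : 3 ≤ n) (i j : Fin n) :
    cartan i j = (if j = i then 2 else 0) + (if j = cyc n i then -1 else 0)
      + (if j = (cyc n).symm i then -1 else 0) := by
  have h1 : cyc n i ≠ i := fsucc_ne (by omega) i
  have h2 : (cyc n).symm i ≠ i := by
    intro h
    have h' := congrArg (cyc n) h
    rw [Equiv.apply_symm_apply] at h'
    exact h1 h'.symm
  have h3 : cyc n i ≠ (cyc n).symm i := by
    intro h
    have : cyc n (cyc n i) = i := by rw [h, Equiv.apply_symm_apply]
    exact fsucc_fsucc_ne hn i this
  have h4 : ∀ k : Fin n, (i = cyc n k) ↔ (k = (cyc n).symm i) := by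
    intro k
    constructor
    · intro h; rw [h, Equiv.symm_apply_apply]
    · intro h; rw [h, Equiv.apply_symm_apply]
  unfold cartan
  simp only [← cyc_apply, h4]
  by_cases e1 : i = j
  · have e2 : j ≠ cyc n i := fun h => h1 (e1.trans h).symm
    have e3 : j ≠ (cyc n).symm i := fun h => h2 (e1.trans h).symm
    rw [if_pos e1, if_pos e1.symm, if_neg e2, if_neg e3]; norm_num
  · rw [if_neg e1, if_neg (fun h : j = i => e1 h.symm)]
    by_cases e2 : j = cyc n i
    · have e3 : j ≠ (cyc n).symm i := fun h => h3 (e2.symm.trans h)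
      rw [if_pos (Or.inl e2), if_pos e2, if_neg e3]; norm_num
    · by_cases e3 : j = (cyc n).symm i
      · rw [if_pos (Or.inr e3), if_neg e2, if_pos e3]; norm_num
      · rw [if_neg (by tauto), if_neg e2, if_neg e3]; norm_num

lemma pairing_self (hn : 3 ≤ n) (a : Fin n → ℤ) :
    pairing a a = ∑ i, (finPart a i) ^ 2 := by
  have inner : ∀ i : Fin n, ∑ j, a i * cartan i j * a j
      = 2 * (a i * a i) - a i * a (cyc n i) - a i * a ((cyc n).symm i) := by
    intro i
    have : ∀ j : Fin n, a i * cartan i j * a j =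
        (if j = i then 2 * (a i * a i) else 0) + (if j = cyc n i then -(a i * a j) else 0)
          + (if j = (cyc n).symm i then -(a i * a j) else 0) := by
      intro j
      rw [cartan_eq hn i j]
      split_ifs <;> subst_vars <;> ring
    rw [Finset.sum_congr rfl fun j _ => this j]
    rw [Finset.sum_add_distrib, Finset.sum_add_distrib]
    simp [Finset.sum_ite_eq]
    ring
  rw [pairing, Finset.sum_congr rfl fun i _ => inner i]
  have h1 : ∑ i, a i * a ((cyc n).symm i) = ∑ i, a (cyc n i) * a i := by
    rw [← Equiv.sum_comp (cyc n) (fun i => a i * a ((cyc n).symm i))]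
    simp
  have h2 : ∑ i, a (cyc n i) * a (cyc n i) = ∑ i, a i * a i :=
    Equiv.sum_comp (cyc n) (fun i => a i * a i)
  have expand : ∀ i : Fin n, (finPart a i) ^ 2
      = a (cyc n i) * a (cyc n i) - 2 * (a i * a (cyc n i)) + a i * a i := by
    intro i; rw [finPart, cyc_apply]; ring
  rw [Finset.sum_congr rfl fun i _ => expand i]
  rw [Finset.sum_sub_distrib, Finset.sum_sub_distrib, Finset.sum_add_distrib,
    Finset.sum_sub_distrib, h1, h2]
  have h3 : ∑ i, a (cyc n i) * a i = ∑ i, a i * a (cyc n i) :=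
    Finset.sum_congr rfl fun i _ => mul_comm _ _
  have h4 : ∑ i : Fin n, 2 * (a i * a i) = 2 * ∑ i : Fin n, a i * a i := by
    rw [Finset.mul_sum]
  have h5 : ∑ i : Fin n, 2 * (a i * a (cyc n i)) = 2 * ∑ i : Fin n, a i * a (cyc n i) := by
    rw [Finset.mul_sum]
  rw [h3, h4, h5]
  ring

end SrefFact

namespace SrefFact

open AffA Aff

variable {n : ℕ}

lemma exists_pq (d : Fin n → ℤ) (h2 : ∑ i, d i ^ 2 = 2) (h0 : ∑ i, d i = 0) :
    ∃ p q : Fin n, p ≠ q ∧ d = Pi.single p 1 - Pi.single q 1 := by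
  obtain ⟨p, hp⟩ : ∃ p, 0 < d p := by
    by_contra hc
    push_neg at hc
    have hall := (Finset.sum_eq_zero_iff_of_nonpos (fun i _ => hc i)).mp h0
    have : ∑ i, d i ^ 2 = 0 := Finset.sum_eq_zero fun i _ => by
      rw [hall i (Finset.mem_univ i)]; ring
    omega
  obtain ⟨q, hq⟩ : ∃ q, d q < 0 := by
    by_contra hc
    push_neg at hc
    have hall := (Finset.sum_eq_zero_iff_of_nonneg (fun i _ => hc i)).mp h0
    have := hall p (Finset.mem_univ p)
    omega
  have hpq : p ≠ q := fun h => by rw [h] at hp; omega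
  have hqmem : q ∈ Finset.univ.erase p := Finset.mem_erase.mpr ⟨fun h => hpq h.symm, Finset.mem_univ q⟩
  have hs1 := Finset.add_sum_erase Finset.univ (fun i => d i ^ 2) (Finset.mem_univ p)
  have hs2 := Finset.add_sum_erase (Finset.univ.erase p) (fun i => d i ^ 2) hqmem
  have hsplit : d p ^ 2 + (d q ^ 2 + ∑ i ∈ (Finset.univ.erase p).erase q, d i ^ 2)
      = ∑ i, d i ^ 2 := by rw [hs2, hs1]
  have hrest : 0 ≤ ∑ i ∈ (Finset.univ.erase p).erase q, d i ^ 2 :=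
    Finset.sum_nonneg fun i _ => sq_nonneg _
  have hp2 : 1 ≤ d p ^ 2 := by nlinarith
  have hq2 : 1 ≤ d q ^ 2 := by nlinarith
  have hp2' : d p ^ 2 = 1 := by omega
  have hq2' : d q ^ 2 = 1 := by omega
  have hrest0 : ∑ i ∈ (Finset.univ.erase p).erase q, d i ^ 2 = 0 := by omega
  have hdp : d p = 1 := by
    rcases sq_eq_one_iff.mp hp2' with h | h
    · exact h
    · omega
  have hdq : d q = -1 := by
    rcases sq_eq_one_iff.mp hq2' with h | h
    · omega
    · exact h
  have hz : ∀ i ∈ (Finset.univ.erase p).erase q, d i ^ 2 = 0 :=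
    (Finset.sum_eq_zero_iff_of_nonneg fun i _ => sq_nonneg _).mp hrest0
  have hqp : ¬ q = p := fun h => hpq h.symm
  refine ⟨p, q, hpq, ?_⟩
  funext i
  by_cases e1 : i = p
  · simp [Pi.single_apply, e1, hpq, hdp]
  · by_cases e2 : i = q
    · simp [Pi.single_apply, e1, e2, hqp, hdq]
    · have hi : i ∈ (Finset.univ.erase p).erase q :=
        Finset.mem_erase.mpr ⟨e2, Finset.mem_erase.mpr ⟨e1, Finset.mem_univ i⟩⟩
      have := hz i hi
      have hdi : d i = 0 := by nlinarith [sq_nonneg (d i)]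
      simp [Pi.single_apply, e1, e2, hdi]

lemma swap_eq_of_single {p q p' q' : Fin n}
    (h : (Pi.single p 1 - Pi.single q 1 : Fin n → ℤ) = Pi.single p' 1 - Pi.single q' 1) :
    Equiv.swap p' q' = Equiv.swap p q := by
  by_cases hpq : p = q
  · subst hpq
    rw [Equiv.swap_self]
    have hp' : p' = q' := by
      by_contra hc
      have h0 := congrFun h p'
      simp [Pi.single_apply, hc] at h0
    subst hp'
    rw [Equiv.swap_self]
  · have hqp : ¬ q = p := fun hh => hpq hh.symm
    have L1 := congrFun h p
    have L2 := congrFun h q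
    simp only [Pi.sub_apply, Pi.single_apply, if_pos rfl, if_neg hpq, if_neg hqp] at L1 L2
    have e1 : p = p' := by
      by_contra a1
      rw [if_neg a1] at L1
      by_cases a2 : p = q' <;> simp [a2] at L1
    subst e1
    have e2 : q = q' := by
      by_contra a4
      rw [if_neg a4] at L2
      by_cases a3 : q = p <;> simp [a3] at L2
    subst e2
    rfl

lemma sref_eq {a : Fin n → ℤ} {p q : Fin n}
    (hd : finPart a = Pi.single p 1 - Pi.single q 1) :
    sref a = ⟨Equiv.swap p q, fun i => coeff0 a * finPart a i⟩ := by
  have hex : ∃ w : Equiv.Perm (Fin n), ∃ p' q' : Fin n,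
      finPart a = Pi.single p' 1 - Pi.single q' 1 ∧ w = Equiv.swap p' q' :=
    ⟨Equiv.swap p q, p, q, hd, rfl⟩
  obtain ⟨p', q', hd', hw⟩ := Classical.epsilon_spec hex
  unfold sref
  congr 1
  rw [hw]
  exact swap_eq_of_single (hd.symm.trans hd')

lemma sum_sq_single_sub {p q : Fin n} (hpq : p ≠ q) :
    ∑ i, ((Pi.single p 1 - Pi.single q 1 : Fin n → ℤ) i) ^ 2 = 2 := by
  have hqp : ¬ q = p := fun hh => hpq hh.symm
  have key : ∀ i : Fin n, ((Pi.single p 1 - Pi.single q 1 : Fin n → ℤ) i) ^ 2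
      = (if i = p then 1 else 0) + (if i = q then 1 else 0) := by
    intro i
    by_cases e1 : i = p
    · simp [Pi.single_apply, e1, hpq]
    · by_cases e2 : i = q
      · simp [Pi.single_apply, e1, e2, hqp]
      · simp [Pi.single_apply, e1, e2]
  rw [Finset.sum_congr rfl fun i _ => key i, Finset.sum_add_distrib]
  simp

lemma single_sub_swap {p q : Fin n} (i : Fin n) :
    (Pi.single p 1 - Pi.single q 1 : Fin n → ℤ) (Equiv.swap p q i)
      = -((Pi.single p 1 - Pi.single q 1 : Fin n → ℤ) i) := by
  by_cases epq : p = q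
  · subst epq
    simp [Equiv.swap_self]
  · have epq' : ¬ q = p := fun h => epq h.symm
    by_cases e1 : i = p
    · subst e1
      rw [Equiv.swap_apply_left]
      simp [Pi.single_apply, epq, epq']
    · by_cases e2 : i = q
      · subst e2
        rw [Equiv.swap_apply_right]
        simp [Pi.single_apply, epq, epq']
      · rw [Equiv.swap_apply_of_ne_of_ne e1 e2]
        simp [Pi.single_apply, e1, e2]

lemma finPart_sub (a b : Fin n → ℤ) : finPart (a - b) = finPart a - finPart b := by
  funext i
  simp only [finPart, Pi.sub_apply]
  ring

lemma finPart_cvec : finPart (cvec n) = 0 := by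
  funext i
  simp [finPart, cvec]

lemma const_of_finPart_zero {x : Fin n → ℤ} (hx : finPart x = 0) (i j : Fin n) : x i = x j := by
  have key : ∀ (v : ℕ) (hv : v < n), x ⟨v, hv⟩ = x ⟨0, Nat.pos_of_ne_zero (by omega)⟩ := by
    intro v
    induction v with
    | zero => intro hv; rfl
    | succ k ih =>
      intro hv
      have hk : k < n := by omega
      have step : x (fsucc ⟨k, hk⟩) = x ⟨k, hk⟩ := by
        have h := congrFun hx ⟨k, hk⟩
        simp only [finPart, Pi.zero_apply] at h
        omega
      have heq : fsucc ⟨k, hk⟩ = ⟨k + 1, hv⟩ := by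
        apply Fin.ext
        rw [fsucc_val]
        simp only
        rw [if_neg (by omega)]
      rw [← heq, step, ih hk]
  have hi := key i.val i.isLt
  have hj := key j.val j.isLt
  simp only [Fin.eta] at hi hj
  rw [hi, hj]

/-- the `0–1` indicator of the cyclic arc `(p, q]`. -/
def bvec (p q : Fin n) : Fin n → ℤ := fun i =>
  if (p < i ∧ i ≤ q) ∨ (q < p ∧ (p < i ∨ i ≤ q)) then 1 else 0

lemma bvec_cases (p q i : Fin n) : bvec p q i = 0 ∨ bvec p q i = 1 := by
  unfold bvec; split <;> simp

lemma bvec_p (p q : Fin n) : bvec p q p = 0 := by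
  unfold bvec
  rw [if_neg]
  rintro (⟨h, -⟩ | ⟨h1, h2 | h2⟩)
  · exact lt_irrefl _ h
  · exact lt_irrefl _ h2
  · exact lt_irrefl _ (lt_of_lt_of_le h1 h2)

lemma finPart_bvec {p q : Fin n} (hpq : p ≠ q) :
    finPart (bvec p q) = Pi.single p 1 - Pi.single q 1 := by
  funext i
  have hpn := p.isLt
  have hqn := q.isLt
  have hin := i.isLt
  have hpq' : p.val ≠ q.val := fun h => hpq (Fin.ext h)
  have hsv := fsucc_val i
  simp only [finPart, bvec, Pi.sub_apply, Pi.single_apply, Fin.lt_def, Fin.le_def,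
    Fin.ext_iff]
  by_cases hc : i.val + 1 = n
  · rw [if_pos hc] at hsv
    rw [hsv]
    split_ifs <;> omega
  · rw [if_neg hc] at hsv
    rw [hsv]
    split_ifs <;> omega

end SrefFact

namespace SrefFact

open AffA Aff

variable {n : ℕ}

lemma mul_w (x y : Aff n) : (x * y).w = x.w * y.w := rfl

lemma mul_t (x y : Aff n) (i : Fin n) : (x * y).t i = x.t (y.w i) + y.t i := rfl

lemma flatten_sum (b b' : Fin n → ℤ) (K : ℕ) :
    ((List.replicate K [b', b]).flatten).sum = K • (b' + b) := by
  induction K with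
  | zero => simp
  | succ m ih =>
    rw [List.replicate_succ, List.flatten_cons, List.sum_append, ih, succ_nsmul]
    simp only [List.sum_cons, List.sum_nil, add_zero]
    abel

lemma coeff0_eq (hn : 0 < n) (a : Fin n → ℤ) : coeff0 a = a ⟨0, hn⟩ := dif_pos hn

end SrefFact

open AffA Aff SrefFact in
theorem sref_factorization' (n : ℕ) (hn : 3 ≤ n) (α : Fin n → ℤ)
    (hα : IsPosRoot α) (hαc : cvec n < α) :
    ∃ l : List (Fin n → ℤ), l ≠ [] ∧ (∀ b ∈ l, IsPosRoot b ∧ b < cvec n) ∧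
      sref α = (l.map sref).prod ∧ l.sum = α := by
  obtain ⟨hroot, hpos⟩ := hα
  have hn0 : 0 < n := by omega
  have hge1 : ∀ i, 1 ≤ α i := fun i => Pi.le_def.mp hαc.le i
  have h2 : ∑ i, finPart α i ^ 2 = 2 := by rw [← pairing_self hn α]; exact hroot
  have h0 : ∑ i, finPart α i = 0 := sum_finPart α
  obtain ⟨p, q, hpq, hd⟩ := exists_pq _ h2 h0
  have hqp : ¬ q = p := fun h => hpq h.symm
  obtain ⟨D, hD⟩ : ∃ D' : Fin n → ℤ, D' = Pi.single p 1 - Pi.single q 1 := ⟨_, rfl⟩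
  rw [← hD] at hd
  obtain ⟨b, hb⟩ : ∃ b' : Fin n → ℤ, b' = bvec p q := ⟨_, rfl⟩
  obtain ⟨b', hbc⟩ : ∃ x : Fin n → ℤ, x = cvec n - b := ⟨_, rfl⟩
  have hb'i : ∀ i, b' i = 1 - b i := fun i => by rw [hbc]; simp [cvec]
  have hfb : finPart b = D := by rw [hb, hD]; exact finPart_bvec hpq
  have hfb' : finPart b' = Pi.single q 1 - Pi.single p 1 := by
    rw [hbc, finPart_sub, finPart_cvec, hfb, hD]
    funext i
    simp only [Pi.sub_apply, Pi.zero_apply]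
    ring
  have hb01 : ∀ i, b i = 0 ∨ b i = 1 := by rw [hb]; exact bvec_cases p q
  have hrootb : IsPosRoot b := by
    refine ⟨?_, fun i => by rcases hb01 i with h | h <;> omega⟩
    rw [IsRealRoot, pairing_self hn, hfb, hD]
    exact sum_sq_single_sub hpq
  have hrootb' : IsPosRoot b' := by
    refine ⟨?_, fun i => by have := hb'i i; rcases hb01 i with h | h <;> omega⟩
    rw [IsRealRoot, pairing_self hn, hfb']
    exact sum_sq_single_sub hqp
  have hfbp : finPart b p = 1 := by
    rw [hfb, hD]
    simp [Pi.single_apply, hpq]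
  have hfb'q : finPart b' q = 1 := by
    rw [hfb']
    simp [Pi.single_apply, hqp]
  have hblt : b < cvec n := by
    refine lt_of_le_of_ne (Pi.le_def.mpr fun i => ?_) fun hEq => ?_
    · have : cvec n i = 1 := rfl
      rcases hb01 i with h | h <;> omega
    · rw [hEq, finPart_cvec] at hfbp
      simp at hfbp
  have hb'lt : b' < cvec n := by
    refine lt_of_le_of_ne (Pi.le_def.mpr fun i => ?_) fun hEq => ?_
    · have : cvec n i = 1 := rfl
      have := hb'i i
      rcases hb01 i with h | h <;> omega
    · rw [hEq, finPart_cvec] at hfb'q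
      simp at hfb'q
  -- the translation amount
  have hconst := const_of_finPart_zero
    (show finPart (α - b) = 0 by rw [finPart_sub, hd, hfb, sub_self])
  obtain ⟨k, hk⟩ : ∃ k : ℤ, k = α p := ⟨_, rfl⟩
  have hbp : b p = 0 := by rw [hb]; exact bvec_p p q
  have hk1 : 1 ≤ k := by rw [hk]; exact hge1 p
  have hab : ∀ i, α i = b i + k := by
    intro i
    have h := hconst i p
    simp only [Pi.sub_apply] at h
    omega
  obtain ⟨K, hK⟩ : ∃ K : ℕ, (K : ℤ) = k := ⟨k.toNat, Int.toNat_of_nonneg (by omega)⟩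
  have hswap : Equiv.swap q p = Equiv.swap p q := Equiv.swap_comm q p
  have hsb : sref b = ⟨Equiv.swap p q, fun i => coeff0 b * finPart b i⟩ :=
    sref_eq (by rw [hfb, hD])
  have hsb' : sref b' = ⟨Equiv.swap p q, fun i => coeff0 b' * finPart b' i⟩ := by
    rw [sref_eq hfb', hswap]
  have hcc : coeff0 b + coeff0 b' = 1 := by
    rw [coeff0_eq hn0, coeff0_eq hn0, hb'i]
    ring
  have hDswap : ∀ i, finPart b' (Equiv.swap p q i) = D i := by
    intro i
    rw [hfb', ← hswap, single_sub_swap (p := q) (q := p) i, hD]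
    simp only [Pi.sub_apply]
    ring
  have hT : sref b' * sref b = (⟨1, fun i => D i⟩ : Aff n) := by
    rw [hsb, hsb']
    refine Aff.ext ?_ ?_
    · rw [mul_w]
      exact Equiv.swap_mul_self p q
    · funext i
      rw [mul_t]
      show coeff0 b' * finPart b' (Equiv.swap p q i) + coeff0 b * finPart b i = D i
      rw [hDswap i, hfb]
      linear_combination (D i) * hcc
  have hprod : ∀ m : ℕ, (((List.replicate m [b', b]).flatten).map sref).prod
      = ⟨1, fun i => (m : ℤ) * D i⟩ := by
    intro m
    induction m with
    | zero =>
      simp only [List.replicate, List.flatten_nil, List.map_nil, List.prod_nil,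
        Nat.cast_zero, zero_mul]
      rfl
    | succ m ih =>
      rw [List.replicate_succ, List.flatten_cons, List.map_append, List.prod_append, ih,
        List.map_cons, List.map_cons, List.map_nil, List.prod_cons, List.prod_cons,
        List.prod_nil, mul_one, hT]
      refine Aff.ext ?_ ?_
      · rw [mul_w]
        exact one_mul 1
      · funext i
        rw [mul_t]
        show D i + (m : ℤ) * D i = ((m + 1 : ℕ) : ℤ) * D i
        push_cast
        ring
  refine ⟨b :: (List.replicate K [b', b]).flatten, by simp, ?_, ?_, ?_⟩
  · intro x hx
    rcases List.mem_cons.mp hx with rfl | hx2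
    · exact ⟨hrootb, hblt⟩
    · obtain ⟨s, hs1, hs2⟩ := List.mem_flatten.mp hx2
      have hs3 := (List.mem_replicate.mp hs1).2
      subst hs3
      simp only [List.mem_cons, List.mem_singleton] at hs2
      rcases hs2 with rfl | rfl | h
      · exact ⟨hrootb', hb'lt⟩
      · exact ⟨hrootb, hblt⟩
      · exact absurd h List.not_mem_nil
  · rw [List.map_cons, List.prod_cons, hprod K, sref_eq (p := p) (q := q) (hd.trans hD), hsb]
    refine Aff.ext ?_ ?_
    · rw [mul_w]
      exact (mul_one _).symm
    · funext i
      rw [mul_t]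
      show coeff0 α * finPart α i
        = coeff0 b * finPart b ((1 : Equiv.Perm (Fin n)) i) + (K : ℤ) * D i
      rw [Equiv.Perm.one_apply, hd, hfb, coeff0_eq hn0, coeff0_eq hn0]
      have h1 := hab ⟨0, hn0⟩
      linear_combination (D i) * h1 + (D i) * hK.symm
  · rw [List.sum_cons, flatten_sum]
    funext i
    have hs1 : (b + K • (b' + b)) i = b i + (K : ℤ) * (b' i + b i) := by
      simp [Pi.add_apply, Pi.smul_apply, nsmul_eq_mul]
      ring
    rw [hs1]
    have := hb'i i
    have := hab i
    have := hK
    nlinarith [hab i, hb'i i]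

open AffA Aff in
/-- for `α > c` a positive real root, `s_α` is a product of
reflections in positive real roots `β_i < c` with `Σ β_i = α`. -/
theorem sref_factorization (n : ℕ) (hn : 3 ≤ n) (α : Fin n → ℤ)
    (hα : IsPosRoot α) (hαc : cvec n < α) :
    ∃ l : List (Fin n → ℤ), l ≠ [] ∧ (∀ b ∈ l, IsPosRoot b ∧ b < cvec n) ∧
      sref α = (l.map sref).prod ∧ l.sum = α := by
  exact sref_factorization' n hn α hα hαc
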